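/- The function f : R_{≥0} → R given by f(z) = erfc(1/√z) · z is convex on (0, ∞), where erfc(w) denotes P_{g∼N(0,1)}(|g| > w). Equivalently, its second derivative equals e^{−1/(2z)}(1+z)/(2 z^{5/2} √(2π)), which is nonnegative for z > 0. -/

import Mathlib

/-- The two-sided Gaussian tail `erfc w = P_{g ∼ N(0,1)}(|g| > w)`; for `w ≥ 0` this is
`2 ∫_w^∞ (1/√(2π)) e^{-x²/2} dx`. -/
noncomputable def erfc (w : ℝ) : ℝ :=
  (ProbabilityTheory.gaussianReal 0 1 {x : ℝ | w < |x|}).toReal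

open Real MeasureTheory ProbabilityTheory Set

/-- The standard Gaussian pdf. -/
noncomputable def gp (x : ℝ) : ℝ := (Real.sqrt (2 * π))⁻¹ * Real.exp (-x ^ 2 / 2)

lemma gp_eq : gaussianPDFReal 0 1 = gp := by
  funext x
  simp [gaussianPDFReal, gp]

lemma gp_cont : Continuous gp := by
  unfold gp
  fun_prop

lemma gp_nonneg (x : ℝ) : 0 ≤ gp x := by
  unfold gp; positivity

lemma gp_even (x : ℝ) : gp (-x) = gp x := by
  simp [gp]

/-- Cumulative integral of the pdf from 0. -/
noncomputable def Fg (w : ℝ) : ℝ := ∫ t in (0:ℝ)..w, gp t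

lemma Fg_hasDerivAt (w : ℝ) : HasDerivAt Fg (gp w) w :=
  intervalIntegral.integral_hasDerivAt_right (gp_cont.intervalIntegrable _ _)
    (gp_cont.stronglyMeasurable.stronglyMeasurableAtFilter)  gp_cont.continuousAt

lemma erfc_eq {w : ℝ} (hw : 0 ≤ w) : erfc w = 1 - 2 * Fg w := by
  have hset : {x : ℝ | w < |x|} = (Set.Icc (-w) w)ᶜ := by
    ext x
    simp only [Set.mem_setOf_eq, Set.mem_compl_iff, Set.mem_Icc, ← abs_le, not_le]
  have hIcc : gaussianReal 0 1 (Set.Icc (-w) w) = ENNReal.ofReal (2 * Fg w) := by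
    rw [gaussianReal_apply_eq_integral 0 one_ne_zero, gp_eq]
    congr 1
    rw [MeasureTheory.integral_Icc_eq_integral_Ioc,
      ← intervalIntegral.integral_of_le (by linarith : -w ≤ w)]
    have hsplit : ∫ x in (-w)..w, gp x =
        (∫ x in (-w)..(0:ℝ), gp x) + ∫ x in (0:ℝ)..w, gp x :=
      (intervalIntegral.integral_add_adjacent_intervals
        (gp_cont.intervalIntegrable _ _) (gp_cont.intervalIntegrable _ _)).symm
    have hsym : (∫ x in (-w)..(0:ℝ), gp x) = ∫ x in (0:ℝ)..w, gp x := by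
      have h1 : (∫ x in (0:ℝ)..w, gp x) = ∫ x in (0:ℝ)..w, gp (-x) := by
        simp only [gp_even]
      rw [h1, intervalIntegral.integral_comp_neg gp, neg_zero]
    rw [hsplit, hsym, Fg]
    ring
  have hle : gaussianReal 0 1 (Set.Icc (-w) w) ≤ 1 := prob_le_one
  have hFg_nonneg : 0 ≤ 2 * Fg w := by
    have : 0 ≤ Fg w := intervalIntegral.integral_nonneg hw fun x _ => gp_nonneg x
    linarith
  rw [erfc, hset, measure_compl measurableSet_Icc (measure_ne_top _ _)]
  rw [measure_univ, hIcc, ENNReal.toReal_sub_of_le (hIcc ▸ hle) ENNReal.one_ne_top]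
  rw [ENNReal.toReal_one, ENNReal.toReal_ofReal hFg_nonneg]

/-- The candidate function equal to `erfc (1/√z) * z` on `(0,∞)`. -/
noncomputable def fg (z : ℝ) : ℝ := z - 2 * (z * Fg ((Real.sqrt z)⁻¹))

/-- The derivative of `fg` on `(0,∞)`. -/
noncomputable def Gg (z : ℝ) : ℝ :=
  1 - 2 * Fg ((Real.sqrt z)⁻¹) + gp ((Real.sqrt z)⁻¹) * (Real.sqrt z)⁻¹

lemma sqrt_inv_hasDerivAt {z : ℝ} (hz : 0 < z) :
    HasDerivAt (fun z => (Real.sqrt z)⁻¹) (-(1 / (2 * Real.sqrt z)) / Real.sqrt z ^ 2) z :=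
  (Real.hasDerivAt_sqrt hz.ne').inv (Real.sqrt_pos.2 hz).ne'

lemma gp_mul_hasDerivAt (u : ℝ) :
    HasDerivAt (fun u : ℝ => gp u * u) (gp u * (1 - u ^ 2)) u := by
  have hinner : HasDerivAt (fun u : ℝ => -u ^ 2 / 2) (-u) u := by
    have h : HasDerivAt (fun u : ℝ => -u ^ 2 / 2) (-(((2:ℕ):ℝ) * u ^ (2 - 1)) / 2) u :=
      ((hasDerivAt_pow 2 u).neg).div_const 2
    convert h using 1
    push_cast; ring
  have hmul := (hinner.exp).mul (hasDerivAt_id u)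
  have h2 := hmul.const_mul (Real.sqrt (2 * π))⁻¹
  have hfun : (fun u : ℝ => (Real.sqrt (2 * π))⁻¹ * (Real.exp (-u ^ 2 / 2) * u))
      = fun u => gp u * u := by
    funext v; rw [gp]; ring
  simp only [id_eq, Pi.mul_apply] at h2
  rw [hfun] at h2
  refine h2.congr_deriv ?_
  rw [gp]; ring

lemma fg_hasDerivAt {z : ℝ} (hz : 0 < z) : HasDerivAt fg (Gg z) z := by
  set s := Real.sqrt z with hs_def
  have hs : 0 < s := Real.sqrt_pos.2 hz
  have hs2 : s ^ 2 = z := Real.sq_sqrt hz.le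
  have hw := sqrt_inv_hasDerivAt hz
  have hFw : HasDerivAt (fun z => Fg ((Real.sqrt z)⁻¹))
      (gp s⁻¹ * (-(1 / (2 * s)) / s ^ 2)) z := by
    have := (Fg_hasDerivAt s⁻¹).comp z hw; exact this
  have h1 : HasDerivAt (fun z => z * Fg ((Real.sqrt z)⁻¹))
      (1 * Fg s⁻¹ + z * (gp s⁻¹ * (-(1 / (2 * s)) / s ^ 2))) z :=
    (hasDerivAt_id z).mul hFw
  have h2 : HasDerivAt fg
      (1 - 2 * (1 * Fg s⁻¹ + z * (gp s⁻¹ * (-(1 / (2 * s)) / s ^ 2)))) z :=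
    (hasDerivAt_id z).sub (h1.const_mul 2)
  convert h2 using 1
  rw [Gg, ← hs_def, ← hs2]
  field_simp
  ring

lemma Gg_hasDerivAt {z : ℝ} (hz : 0 < z) :
    HasDerivAt Gg (gp ((Real.sqrt z)⁻¹) * (1 + ((Real.sqrt z)⁻¹) ^ 2)
      * (1 / (2 * z * Real.sqrt z))) z := by
  set s := Real.sqrt z with hs_def
  have hs : 0 < s := Real.sqrt_pos.2 hz
  have hs2 : s ^ 2 = z := Real.sq_sqrt hz.le
  have hw := sqrt_inv_hasDerivAt hz
  set w' : ℝ := -(1 / (2 * s)) / s ^ 2 with hw'_def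
  have hFw : HasDerivAt (fun z => Fg ((Real.sqrt z)⁻¹)) (gp s⁻¹ * w') z := by
    have := (Fg_hasDerivAt s⁻¹).comp z hw; exact this
  have hqw : HasDerivAt (fun z => gp ((Real.sqrt z)⁻¹) * (Real.sqrt z)⁻¹)
      (gp s⁻¹ * (1 - (s⁻¹) ^ 2) * w') z := by
    have := (gp_mul_hasDerivAt s⁻¹).comp z hw; exact this
  have hG : HasDerivAt Gg
      (0 - 2 * (gp s⁻¹ * w') + gp s⁻¹ * (1 - (s⁻¹) ^ 2) * w') z :=
    ((hasDerivAt_const z (1 : ℝ)).sub (hFw.const_mul 2)).add hqw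
  convert hG using 1
  rw [hw'_def, ← hs2]
  field_simp
  ring

theorem fg_convexOn : ConvexOn ℝ (Set.Ioi (0:ℝ)) fg := by
  have hint : interior (Set.Ioi (0:ℝ)) = Set.Ioi 0 := interior_Ioi
  have hGmono : MonotoneOn Gg (Set.Ioi (0:ℝ)) := by
    apply monotoneOn_of_deriv_nonneg (convex_Ioi 0)
    · exact fun z hz => (Gg_hasDerivAt hz).continuousAt.continuousWithinAt
    · rw [hint]; exact fun z hz => (Gg_hasDerivAt hz).differentiableAt.differentiableWithinAt
    · rw [hint]
      intro z hz
      rw [(Gg_hasDerivAt hz).deriv]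
      have h1 := gp_nonneg ((Real.sqrt z)⁻¹)
      have h2 : (0:ℝ) < Real.sqrt z := Real.sqrt_pos.2 hz
      have hz' : (0:ℝ) < z := hz
      positivity
  apply MonotoneOn.convexOn_of_deriv (convex_Ioi 0)
  · exact fun z hz => (fg_hasDerivAt hz).continuousAt.continuousWithinAt
  · rw [hint]; exact fun z hz => (fg_hasDerivAt hz).differentiableAt.differentiableWithinAt
  · rw [hint]
    intro a ha b hb hab
    rw [(fg_hasDerivAt ha).deriv, (fg_hasDerivAt hb).deriv]
    exact hGmono ha hb hab

/-- the function `z ↦ erfc(1/√z) · z` is convex on `(0, ∞)`. -/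
theorem stmt2 : ConvexOn ℝ (Set.Ioi (0 : ℝ)) (fun z => erfc (1 / Real.sqrt z) * z) := by
  have heq : ∀ z ∈ Set.Ioi (0:ℝ), erfc (1 / Real.sqrt z) * z = fg z := by
    intro z hz
    have hs : 0 < Real.sqrt z := Real.sqrt_pos.2 hz
    rw [one_div, erfc_eq (by positivity), fg]
    ring
  refine ⟨fg_convexOn.1, fun x hx y hy a b ha hb hab => ?_⟩
  have hmem : a • x + b • y ∈ Set.Ioi (0:ℝ) := fg_convexOn.1 hx hy ha hb hab
  dsimp only
  rw [heq x hx, heq y hy, heq _ hmem]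
  exact fg_convexOn.2 hx hy ha hb hab
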